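/- Let α = (√5 - 1)/2 and let β be the unique real number in (0,1) with 1 - β - β² + β³ - β⁴ = 0. Let n ≥ 0 be a natural number and suppose β^(2^(-n)) < q < α^(2^(-n-1)). Then t_N · S_N(q) < 0 for all N with 1 ≤ N < 3·2^(n+1), while t_M · S_M(q) > 0 for M = 3·2^(n+1). -/
import Mathlib


/-- The Thue-Morse sequence: `tm n = (-1)^(s₂ n)` where `s₂ n` is the sum of the
binary digits of `n`. -/
def tm (n : ℕ) : ℤ := (-1) ^ (Nat.digits 2 n).sum

/-- The partial sums `S q n = ∑_{0 ≤ j < n} tm j * q^j`. -/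
noncomputable def S (q : ℝ) (n : ℕ) : ℝ := ∑ j ∈ Finset.range n, (tm j : ℝ) * q ^ j

lemma tm_even (k : ℕ) : tm (2*k) = tm k := by
  rcases Nat.eq_zero_or_pos k with h|h
  · simp [h]
  · unfold tm
    rw [Nat.digits_def' (by norm_num) (by omega)]
    simp [Nat.mul_div_cancel_left _ (by norm_num : 0 < 2)]

lemma tm_odd (k : ℕ) : tm (2*k+1) = -tm k := by
  unfold tm
  rw [Nat.digits_def' (by norm_num) (by omega)]
  simp [pow_succ, Nat.mul_add_div, Nat.mul_add_mod]
  ring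

lemma tm_cases (k : ℕ) : tm k = 1 ∨ tm k = -1 := by
  unfold tm; rcases Nat.even_or_odd (Nat.digits 2 k).sum with h|h
  · left; exact h.neg_one_pow
  · right; exact h.neg_one_pow

lemma S_even (q : ℝ) (k : ℕ) : S q (2*k) = (1-q) * S (q^2) k := by
  induction k with
  | zero => simp [S]
  | succ m ih =>
    have h2 : 2*(m+1) = (2*m)+1+1 := by ring
    rw [h2]
    unfold S
    rw [Finset.sum_range_succ, Finset.sum_range_succ, Finset.sum_range_succ]
    have := ih
    unfold S at this
    rw [this]
    rw [tm_odd, tm_even]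
    push_cast
    ring

lemma S_odd (q : ℝ) (k : ℕ) : S q (2*k+1) = (1-q) * S (q^2) k + (tm k : ℝ) * q^(2*k) := by
  unfold S
  rw [Finset.sum_range_succ]
  have := S_even q k
  unfold S at this
  rw [this, tm_even]

lemma step (q : ℝ) (hqh : 1/2 < q) (hq1 : q < 1) (M : ℕ)
    (IH1 : ∀ k, 1 ≤ k → k < M → (tm k : ℝ) * S (q^2) k < 0 ∧ (1-q^2)*|S (q^2) k| ≤ (q^2)^k)
    (IH2 : 0 < (tm M : ℝ) * S (q^2) M) :
    (∀ k, 1 ≤ k → k < 2*M → (tm k : ℝ) * S q k < 0 ∧ (1-q)*|S q k| ≤ q^k) ∧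
      0 < (tm (2*M) : ℝ) * S q (2*M) := by
  have hq0 : 0 < q := by linarith
  have h1q : 0 < 1 - q := by linarith
  have hstrict : ∀ j, 1 ≤ j → j < M → (1-q)*|S (q^2) j| < q^(2*j) := by
    intro j h1 h2
    obtain ⟨hs, hb⟩ := IH1 j h1 h2
    have hne : S (q^2) j ≠ 0 := by
      intro h; rw [h] at hs; simp at hs
    have habs : 0 < |S (q^2) j| := abs_pos.mpr hne
    have hqq : q^2 < q := by nlinarith
    have : (1-q)*|S (q^2) j| < (1-q^2)*|S (q^2) j| := by nlinarith
    calc (1-q)*|S (q^2) j| < (1-q^2)*|S (q^2) j| := this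
      _ ≤ (q^2)^j := hb
      _ = q^(2*j) := by rw [pow_mul]
  constructor
  · intro k h1 h2
    rcases Nat.even_or_odd k with ⟨j, hj⟩ | ⟨j, hj⟩
    · -- k = 2j
      subst hj
      have hj1 : 1 ≤ j := by omega
      have hj2 : j < M := by omega
      obtain ⟨hs, hb⟩ := IH1 j hj1 hj2
      rw [show j + j = 2*j from by ring, tm_even, S_even]
      constructor
      · nlinarith
      · have habs : |(1-q) * S (q^2) j| = (1-q) * |S (q^2) j| := by
          rw [abs_mul, abs_of_pos h1q]
        rw [habs]
        have h3 := hstrict j hj1 hj2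
        have h4 : 0 ≤ |S (q^2) j| := abs_nonneg _
        have h5 : 0 ≤ (1-q)*|S (q^2) j| := mul_nonneg h1q.le h4
        nlinarith [mul_nonneg hq0.le h5]
    · -- k = 2j+1
      subst hj
      rw [show 2*j+1 = 2*j+1 from rfl, tm_odd, S_odd]
      push_cast
      rcases Nat.eq_zero_or_pos j with hj0 | hjp
      · subst hj0
        simp [S]
        norm_num [tm]
        linarith
      · have hj2 : j < M := by omega
        obtain ⟨hs, hb⟩ := IH1 j hjp hj2
        have h3 := hstrict j hjp hj2
        rw [show q^(2*j+1) = q * q^(2*j) from by ring]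
        set P := q^(2*j) with hPdef
        have hpow : 0 < P := pow_pos hq0 _
        rcases tm_cases j with h|h <;> rw [h] at hs ⊢ <;> push_cast at hs ⊢
        · -- tm j = 1, S (q^2) j < 0
          have hSneg : S (q^2) j < 0 := by nlinarith
          rw [abs_of_neg hSneg] at h3
          constructor
          · nlinarith
          · have hV1 : 0 < (1-q) * S (q^2) j + 1 * P := by nlinarith
            have hV2 : (1-q) * S (q^2) j + 1 * P ≤ P := by nlinarith
            rw [abs_of_pos hV1]
            nlinarith
        · -- tm j = -1, S (q^2) j > 0
          have hSpos : 0 < S (q^2) j := by nlinarith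
          rw [abs_of_pos hSpos] at h3
          constructor
          · nlinarith
          · have hV1 : (1-q) * S (q^2) j + (-1) * P < 0 := by nlinarith
            have hV2 : -P ≤ (1-q) * S (q^2) j + (-1) * P := by nlinarith
            rw [abs_of_neg hV1]
            nlinarith
  · rw [tm_even, S_even]
    nlinarith

lemma fdec (β q : ℝ) (hβ0 : 0 < β) (hq : β < q) (hq1 : q < 1)
    (hβ : 1 - β - β ^ 2 + β ^ 3 - β ^ 4 = 0) : 1 - q - q^2 + q^3 - q^4 < 0 := by
  have hq0 : 0 < q := lt_trans hβ0 hq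
  have hB : 0 < 1 + (q+β) - (q^2+q*β+β^2) + (q^3+q^2*β+q*β^2+β^3) := by
    have h1 : 0 ≤ q*(1-q) := mul_nonneg hq0.le (by linarith)
    have h2 : 0 ≤ β*(1-β) := mul_nonneg hβ0.le (by linarith)
    have h3 : q*β < 1 := by nlinarith
    have h4 : 0 < q^3+q^2*β+q*β^2+β^3 := by positivity
    nlinarith
  nlinarith [mul_pos (by linarith : (0:ℝ) < q - β) hB]

set_option maxHeartbeats 1000000 in
lemma base (β : ℝ) (hβ0 : 0 < β) (hβ1 : β < 1)
    (hβ : 1 - β - β ^ 2 + β ^ 3 - β ^ 4 = 0)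
    (q : ℝ) (hqβ : β < q) (hqa : q^2 + q^4 < 1) :
    (∀ k, 1 ≤ k → k < 6 → (tm k : ℝ) * S q k < 0 ∧ (1-q)*|S q k| ≤ q^k) ∧
      0 < (tm 6 : ℝ) * S q 6 := by
  have hβh : 1/2 < β := by
    nlinarith [sq_nonneg β, sq_nonneg (β - 1/2), mul_pos hβ0 hβ0, sq_nonneg (β*β)]
  have hq0 : 0 < q := by linarith
  have hq1 : q < 1 := by nlinarith
  have hβ12 : 1 < β + β^2 := by nlinarith [pow_pos hβ0 3]
  have h12 : 1 < q + q^2 := by nlinarith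
  have hf5 : 1 - q - q^2 + q^3 - q^4 < 0 := fdec β q hβ0 hqβ hq1 hβ
  have hS1 : S q 1 = 1 := by norm_num [S, Finset.sum_range_succ, tm]
  have hS2 : S q 2 = 1 - q := by norm_num [S, Finset.sum_range_succ, tm]; ring
  have hS3 : S q 3 = 1 - q - q^2 := by norm_num [S, Finset.sum_range_succ, tm]; ring
  have hS4 : S q 4 = 1 - q - q^2 + q^3 := by norm_num [S, Finset.sum_range_succ, tm]; ring
  have hS5 : S q 5 = 1 - q - q^2 + q^3 - q^4 := by
    norm_num [S, Finset.sum_range_succ, tm]; ring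
  have hS6 : S q 6 = 1 - q - q^2 + q^3 - q^4 + q^5 := by
    norm_num [S, Finset.sum_range_succ, tm]; ring
  have htm1 : (tm 1 : ℝ) = -1 := by norm_num [tm]
  have htm2 : (tm 2 : ℝ) = -1 := by norm_num [tm]
  have htm3 : (tm 3 : ℝ) = 1 := by norm_num [tm]
  have htm4 : (tm 4 : ℝ) = -1 := by norm_num [tm]
  have htm5 : (tm 5 : ℝ) = 1 := by norm_num [tm]
  have htm6 : (tm 6 : ℝ) = 1 := by norm_num [tm]
  have a1 : 1 - q < q^2 := by linarith
  have a2 : 1 - q^2 < q := by nlinarith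
  constructor
  · intro k h1 h2
    interval_cases k
    · rw [hS1, htm1]
      constructor
      · norm_num
      · rw [abs_one]; norm_num; linarith
    · rw [hS2, htm2]
      constructor
      · nlinarith
      · rw [abs_of_pos (by linarith : (0:ℝ) < 1 - q)]; nlinarith
    · rw [hS3, htm3]
      constructor
      · nlinarith
      · rw [abs_of_neg (by linarith : 1 - q - q^2 < 0)]
        have c1 : q+q^2-1 ≤ q^2 := by linarith
        have c2 : (1-q)*(q+q^2-1) ≤ (1-q)*q^2 :=
          mul_le_mul_of_nonneg_left c1 (by linarith)
        have c3 : (1-q)*q^2 ≤ q*q^2 := mul_le_mul_of_nonneg_right (by linarith) (sq_nonneg q)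
        have c4 : q*q^2 = q^3 := by ring
        nlinarith
    · rw [hS4, htm4]
      have hS4pos : 0 < 1 - q - q^2 + q^3 := by nlinarith
      constructor
      · nlinarith
      · rw [abs_of_pos hS4pos]
        have b1 : (1-q)^2 ≤ q^4 := by nlinarith [sq_nonneg (1-q)]
        have b2 : 1-q^2 ≤ 1 := by nlinarith
        have b3 : (1-q)^2*(1-q^2) ≤ q^4*1 :=
          mul_le_mul b1 b2 (by nlinarith) (by positivity)
        have b4 : (1-q)*(1 - q - q^2 + q^3) = (1-q)^2*(1-q^2) := by ring
        linarith [b3, b4.le, b4.ge]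
    · rw [hS5, htm5]
      constructor
      · nlinarith
      · rw [abs_of_neg (by linarith : 1 - q - q^2 + q^3 - q^4 < 0)]
        have d0 : 0 ≤ q + q^2 - q^3 + q^4 - 1 := by linarith
        have d1 : (1-q)*(q + q^2 - q^3 + q^4 - 1) ≤ q^2*(q + q^2 - q^3 + q^4 - 1) :=
          mul_le_mul_of_nonneg_right a1.le d0
        have d2 : 0 < q^3 - q^2 + 1 := by nlinarith [mul_pos hq0 hq0]
        have d3 : q + q^2 - q^3 + q^4 - 1 ≤ q^3 := by
          nlinarith [mul_nonneg (by linarith : (0:ℝ) ≤ 1-q) d2.le]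
        have d4 : q^2*(q + q^2 - q^3 + q^4 - 1) ≤ q^2*q^3 :=
          mul_le_mul_of_nonneg_left d3 (sq_nonneg q)
        have d5 : q^2*q^3 = q^5 := by ring
        have d6 : (1-q)*(-(1 - q - q^2 + q^3 - q^4)) = (1-q)*(q + q^2 - q^3 + q^4 - 1) := by
          ring
        linarith
  · rw [hS6, htm6]
    have e1 : 1 - q - q^2 + q^3 - q^4 + q^5 = (1-q)*(1-q^2-q^4) := by ring
    rw [e1]
    have e2 : 0 < (1-q)*(1-q^2-q^4) := mul_pos (by linarith) (by linarith)
    linarith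

lemma key (β : ℝ) (hβ0 : 0 < β) (hβ1 : β < 1)
    (hβ : 1 - β - β ^ 2 + β ^ 3 - β ^ 4 = 0) :
    ∀ n : ℕ, ∀ q : ℝ,
      β ^ ((2 : ℝ) ^ (-(n : ℤ))) < q →
      q < ((Real.sqrt 5 - 1) / 2) ^ ((2 : ℝ) ^ (-(n : ℤ) - 1)) →
      (∀ k, 1 ≤ k → k < 3*2^(n+1) →
        (tm k : ℝ) * S q k < 0 ∧ (1-q)*|S q k| ≤ q^k) ∧
        0 < (tm (3*2^(n+1)) : ℝ) * S q (3*2^(n+1)) := by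
  have hs5 : Real.sqrt 5 ^ 2 = 5 := Real.sq_sqrt (by norm_num)
  have hs5' : 2 < Real.sqrt 5 := by nlinarith [Real.sqrt_nonneg 5]
  have hs5'' : Real.sqrt 5 < 3 := by nlinarith [Real.sqrt_nonneg 5]
  set a : ℝ := (Real.sqrt 5 - 1) / 2 with ha
  have ha0 : 0 < a := by rw [ha]; linarith
  have ha1 : a < 1 := by rw [ha]; linarith
  have haq : a + a^2 = 1 := by rw [ha]; nlinarith
  intro n
  induction n with
  | zero =>
    intro q hq0 hq1
    simp only [Nat.cast_zero, neg_zero, zpow_zero, Real.rpow_one] at hq0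
    simp only [Nat.cast_zero, neg_zero, zero_sub] at hq1
    rw [show ((2:ℝ)^((-1):ℤ)) = ((1:ℝ)/2) from by norm_num] at hq1
    have hqpos : 0 < q := lt_trans hβ0 hq0
    have hA : (a ^ ((1:ℝ)/2)) ^ (2:ℕ) = a := by
      rw [← Real.rpow_natCast (a ^ ((1:ℝ)/2)) 2, ← Real.rpow_mul ha0.le]
      norm_num
    have hq2a : q^2 < a := by
      calc q^2 < (a ^ ((1:ℝ)/2)) ^ (2:ℕ) := by
            apply pow_lt_pow_left₀ hq1 hqpos.le (by norm_num)
        _ = a := hA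
    have hqa : q^2 + q^4 < 1 := by nlinarith [sq_nonneg q]
    exact base β hβ0 hβ1 hβ q hq0 hqa
  | succ n IH =>
    intro q hq0 hq1
    have hcast : (-(((n+1):ℕ):ℤ)) = -(n:ℤ) - 1 := by push_cast; ring
    rw [hcast] at hq0 hq1
    set e : ℝ := (2:ℝ) ^ (-(n:ℤ) - 1) with he
    set E : ℝ := (2:ℝ) ^ (-(n:ℤ) - 1 - 1) with hE
    have he0 : 0 < e := by rw [he]; positivity
    have hE0 : 0 < E := by rw [hE]; positivity
    have he1 : e ≤ 1 := by
      rw [he]; exact zpow_le_one_of_nonpos₀ (by norm_num) (by omega)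
    have hee : (2:ℝ) ^ (-(n:ℤ)) = e + e := by
      rw [he, show (-(n:ℤ)) = (-(n:ℤ)-1) + 1 from by ring, zpow_add₀ (two_ne_zero)]
      ring
    have hEE : (2:ℝ) ^ (-(n:ℤ) - 1) = E + E := by
      rw [hE, show (-(n:ℤ)-1) = (-(n:ℤ)-1-1) + 1 from by ring, zpow_add₀ (two_ne_zero)]
      ring
    -- q bounds
    have hβe : β ≤ β ^ e := by
      nth_rewrite 1 [show β = β ^ (1:ℝ) from (Real.rpow_one β).symm]
      exact Real.rpow_le_rpow_of_exponent_ge hβ0 hβ1.le he1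
    have hqhalf : 1/2 < q := by
      have hβh : 1/2 < β := by
        nlinarith [sq_nonneg β, sq_nonneg (β - 1/2), mul_pos hβ0 hβ0, sq_nonneg (β*β)]
      calc (1/2 : ℝ) < β := hβh
        _ ≤ β ^ e := hβe
        _ < q := hq0
    have hqpos : 0 < q := by linarith
    have hq1' : q < 1 := by
      calc q < a ^ E := hq1
        _ < 1 := Real.rpow_lt_one ha0.le ha1 hE0
    -- squared bounds for q^2 at level n
    have hq20 : β ^ ((2:ℝ) ^ (-(n:ℤ))) < q^2 := by
      rw [hee, Real.rpow_add hβ0]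
      have hb : 0 < β ^ e := Real.rpow_pos_of_pos hβ0 e
      nlinarith
    have hq21 : q^2 < a ^ ((2:ℝ) ^ (-(n:ℤ) - 1)) := by
      rw [hEE, Real.rpow_add ha0]
      have hb : 0 < a ^ E := Real.rpow_pos_of_pos ha0 E
      nlinarith
    obtain ⟨IH1, IH2⟩ := IH (q^2) hq20 hq21
    have hM : 3*2^(n+1+1) = 2*(3*2^(n+1)) := by ring
    rw [hM]
    exact step q hqhalf hq1' (3*2^(n+1)) IH1 IH2

theorem main_sign_three (β : ℝ) (hβ0 : 0 < β) (hβ1 : β < 1)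
    (hβ : 1 - β - β ^ 2 + β ^ 3 - β ^ 4 = 0)
    (n : ℕ) (q : ℝ)
    (hq0 : β ^ ((2 : ℝ) ^ (-(n : ℤ))) < q)
    (hq1 : q < ((Real.sqrt 5 - 1) / 2) ^ ((2 : ℝ) ^ (-(n : ℤ) - 1))) :
    (∀ N : ℕ, 1 ≤ N → N < 3 * 2 ^ (n + 1) → (tm N : ℝ) * S q N < 0) ∧
      0 < (tm (3 * 2 ^ (n + 1)) : ℝ) * S q (3 * 2 ^ (n + 1)) := by
  obtain ⟨h1, h2⟩ := key β hβ0 hβ1 hβ n q hq0 hq1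
  exact ⟨fun N hN1 hN2 => (h1 N hN1 hN2).1, h2⟩
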